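/- Let A ∈ ℝ^{n×n} be a block upper-triangular matrix A = [[A₁₁, A₁₂],[0, A₂₂]], where A₁₁ ∈ ℝ^{p×p}, A₂₂ ∈ ℝ^{q×q}, A₁₂ ∈ ℝ^{p×q}, and n = p + q. Then A is diagonally stable if and only if both A₁₁ and A₂₂ are diagonally stable. -/

import Mathlib

open Matrix

section AuxLemmas

variable {n : Type*} [Fintype n] [DecidableEq n]

lemma herm_aux' (A : Matrix n n ℝ) (d : n → ℝ) :
    (-(Aᵀ * Matrix.diagonal d + Matrix.diagonal d * A)).IsHermitian := by
  simp only [Matrix.IsHermitian, conjTranspose_eq_transpose_of_trivial, transpose_neg,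
    transpose_add, transpose_mul, diagonal_transpose, transpose_transpose]
  rw [add_comm]

lemma smul_one_sub_posSemidef' {M : Matrix n n ℝ} (hM : M.IsHermitian) (α : ℝ)
    (h : ∀ i, α ≤ hM.eigenvalues i) : (M - α • 1).PosSemidef := by
  set U : Matrix n n ℝ := (hM.eigenvectorUnitary : Matrix n n ℝ) with hUdef
  have hU : U * star U = 1 := Unitary.coe_mul_star_self _
  have key : M - α • 1 = U * Matrix.diagonal (fun i => hM.eigenvalues i - α) * star U := by
    conv_lhs => rw [hM.spectral_theorem, Unitary.conjStarAlgAut_apply]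
    have h1 : (α • (1 : Matrix n n ℝ)) = U * (α • 1) * star U := by
      rw [mul_smul_comm, smul_mul_assoc, mul_one, hU]
    rw [h1, ← Matrix.sub_mul, ← Matrix.mul_sub]
    congr 1
    congr 1
    ext i j
    by_cases hij : i = j <;> simp [hij, Matrix.diagonal, Matrix.one_apply]
  rw [key, Matrix.star_eq_conjTranspose]
  exact (Matrix.posSemidef_diagonal_iff.mpr
    (fun i => sub_nonneg.mpr (h i))).mul_mul_conjTranspose_same _

lemma posDef_lower_bound' {M : Matrix n n ℝ} (hM : M.PosDef) :
    ∃ α : ℝ, 0 < α ∧ ∀ x : n → ℝ, α * (x ⬝ᵥ x) ≤ x ⬝ᵥ M *ᵥ x := by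
  rcases isEmpty_or_nonempty n with hn | hn
  · exact ⟨1, one_pos, fun x => by simp [dotProduct]⟩
  · obtain ⟨i₀, hi₀⟩ := Finset.exists_min_image Finset.univ hM.1.eigenvalues
      ⟨Classical.arbitrary n, Finset.mem_univ _⟩
    refine ⟨hM.1.eigenvalues i₀, hM.eigenvalues_pos i₀, fun x => ?_⟩
    have hpsd := smul_one_sub_posSemidef' hM.1 (hM.1.eigenvalues i₀)
      (fun i => hi₀.2 i (Finset.mem_univ i))
    have := hpsd.dotProduct_mulVec_nonneg x
    simp only [star_trivial, Matrix.sub_mulVec, Matrix.smul_mulVec, Matrix.one_mulVec,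
      dotProduct_sub, dotProduct_smul, smul_eq_mul] at this
    linarith

end AuxLemmas

section BlockLemmas

variable {p q : Type*} [Fintype p] [Fintype q] [DecidableEq p] [DecidableEq q]

lemma blockS' (A11 : Matrix p p ℝ) (A12 : Matrix p q ℝ) (A22 : Matrix q q ℝ)
    (d1 : p → ℝ) (d2 : q → ℝ) :
    -((Matrix.fromBlocks A11 A12 0 A22)ᵀ * Matrix.diagonal (Sum.elim d1 d2)
        + Matrix.diagonal (Sum.elim d1 d2) * Matrix.fromBlocks A11 A12 0 A22)
      = Matrix.fromBlocks
          (-(A11ᵀ * Matrix.diagonal d1 + Matrix.diagonal d1 * A11))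
          (-(Matrix.diagonal d1 * A12))
          (-(A12ᵀ * Matrix.diagonal d1))
          (-(A22ᵀ * Matrix.diagonal d2 + Matrix.diagonal d2 * A22)) := by
  rw [← Matrix.fromBlocks_diagonal]
  simp only [Matrix.fromBlocks_transpose, Matrix.fromBlocks_multiply, Matrix.fromBlocks_add,
    Matrix.fromBlocks_neg, Matrix.transpose_zero, Matrix.mul_zero, Matrix.zero_mul,
    add_zero, zero_add, neg_add_rev]

omit [DecidableEq p] [DecidableEq q] in
lemma quad_fromBlocks' (B11 : Matrix p p ℝ) (B12 : Matrix p q ℝ) (B21 : Matrix q p ℝ)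
    (B22 : Matrix q q ℝ) (u : p → ℝ) (v : q → ℝ) :
    (Sum.elim u v) ⬝ᵥ (Matrix.fromBlocks B11 B12 B21 B22) *ᵥ (Sum.elim u v)
      = u ⬝ᵥ B11 *ᵥ u + u ⬝ᵥ B12 *ᵥ v + (v ⬝ᵥ B21 *ᵥ u + v ⬝ᵥ B22 *ᵥ v) := by
  rw [Matrix.fromBlocks_mulVec, sumElim_dotProduct_sumElim, dotProduct_add,
    dotProduct_add]
  simp [Sum.elim_comp_inl, Sum.elim_comp_inr]

omit [DecidableEq p] [DecidableEq q] in
lemma cauchy_bound' (B : Matrix p q ℝ) (v : q → ℝ) :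
    (B *ᵥ v) ⬝ᵥ (B *ᵥ v) ≤ (∑ i, ∑ j, (B i j)^2) * (v ⬝ᵥ v) := by
  calc (B *ᵥ v) ⬝ᵥ (B *ᵥ v) = ∑ i, (∑ j, B i j * v j)^2 := by
        simp [dotProduct, Matrix.mulVec, sq]
    _ ≤ ∑ i, (∑ j, (B i j)^2) * (∑ j, (v j)^2) :=
        Finset.sum_le_sum fun i _ =>
          Finset.sum_mul_sq_le_sq_mul_sq Finset.univ (fun j => B i j) v
    _ = (∑ i, ∑ j, (B i j)^2) * (v ⬝ᵥ v) := by
        rw [← Finset.sum_mul]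
        congr 1
        simp [dotProduct, sq]

end BlockLemmas

/-- A real square matrix `A` is *diagonally stable* if there exists a diagonal matrix `D`
with positive diagonal entries such that `Aᵀ D + D A` is negative definite. -/
def DiagonallyStable {n : Type*} [Fintype n] [DecidableEq n] (A : Matrix n n ℝ) : Prop :=
  ∃ d : n → ℝ, (∀ i, 0 < d i) ∧
    (-(Aᵀ * Matrix.diagonal d + Matrix.diagonal d * A)).PosDef

/-- a block upper-triangular matrix is diagonally stable iff both of its
diagonal blocks are diagonally stable. -/
theorem blockTriangular_diagonallyStable_iff (p q : ℕ)
    (A11 : Matrix (Fin p) (Fin p) ℝ) (A12 : Matrix (Fin p) (Fin q) ℝ)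
    (A22 : Matrix (Fin q) (Fin q) ℝ) :
    DiagonallyStable (Matrix.fromBlocks A11 A12 0 A22) ↔
      DiagonallyStable A11 ∧ DiagonallyStable A22 := by
  constructor
  · rintro ⟨d, hd, hP⟩
    have hde : Sum.elim (d ∘ Sum.inl) (d ∘ Sum.inr) = d := Sum.elim_comp_inl_inr d
    rw [← hde, blockS'] at hP
    constructor
    · refine ⟨d ∘ Sum.inl, fun i => hd _, posDef_iff_dotProduct_mulVec.mpr ⟨herm_aux' _ _, fun u hu => ?_⟩⟩
      have hx : (Sum.elim u (0 : Fin q → ℝ)) ≠ 0 := by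
        intro h
        exact hu (funext fun i => congrFun h (Sum.inl i))
      have := hP.dotProduct_mulVec_pos hx
      rw [star_trivial]
      simp only [star_trivial, quad_fromBlocks', Matrix.mulVec_zero, dotProduct_zero,
        zero_dotProduct, add_zero, zero_add] at this
      exact this
    · refine ⟨d ∘ Sum.inr, fun i => hd _, posDef_iff_dotProduct_mulVec.mpr ⟨herm_aux' _ _, fun v hv => ?_⟩⟩
      have hx : (Sum.elim (0 : Fin p → ℝ) v) ≠ 0 := by
        intro h
        exact hv (funext fun i => congrFun h (Sum.inr i))
      have := hP.dotProduct_mulVec_pos hx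
      rw [star_trivial]
      simp only [star_trivial, quad_fromBlocks', Matrix.mulVec_zero, dotProduct_zero,
        zero_dotProduct, add_zero, zero_add] at this
      exact this
  · rintro ⟨⟨d1, hd1, hP1⟩, ⟨d2, hd2, hP2⟩⟩
    obtain ⟨α, hα, hαq⟩ := posDef_lower_bound' hP1
    obtain ⟨β, hβ, hβq⟩ := posDef_lower_bound' hP2
    set B : Matrix (Fin p) (Fin q) ℝ := Matrix.diagonal d1 * A12 with hB
    set τ : ℝ := ∑ i, ∑ j, (B i j)^2 with hτ
    have hτ0 : 0 ≤ τ := Finset.sum_nonneg fun i _ => Finset.sum_nonneg fun j _ => sq_nonneg _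
    set ε : ℝ := (τ + α * β) / (α * β) with hε
    have hεpos : 0 < ε := div_pos (by nlinarith) (by positivity)
    have hαεβ : α * ε * β = τ + α * β := by
      rw [hε]; field_simp
    refine ⟨Sum.elim d1 (ε • d2), ?_, ?_⟩
    · rintro (i | j)
      · exact hd1 i
      · exact mul_pos hεpos (hd2 j)
    · have hM2' : -(A22ᵀ * Matrix.diagonal (ε • d2) + Matrix.diagonal (ε • d2) * A22)
          = ε • (-(A22ᵀ * Matrix.diagonal d2 + Matrix.diagonal d2 * A22)) := by
        rw [Matrix.diagonal_smul, Matrix.mul_smul, Matrix.smul_mul, ← smul_add, ← smul_neg]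
      rw [blockS', hM2']
      refine posDef_iff_dotProduct_mulVec.mpr ⟨?_, fun x hx => ?_⟩
      · have := herm_aux' (Matrix.fromBlocks A11 A12 0 A22) (Sum.elim d1 (ε • d2))
        rwa [blockS', hM2'] at this
      · set u : Fin p → ℝ := x ∘ Sum.inl with hu
        set v : Fin q → ℝ := x ∘ Sum.inr with hv
        have hxe : Sum.elim u v = x := Sum.elim_comp_inl_inr x
        rw [star_trivial, ← hxe, quad_fromBlocks']
        have hBT : v ⬝ᵥ (-(A12ᵀ * Matrix.diagonal d1)) *ᵥ u = -(u ⬝ᵥ B *ᵥ v) := by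
          have h1 : A12ᵀ * Matrix.diagonal d1 = Bᵀ := by
            rw [hB, Matrix.transpose_mul, Matrix.diagonal_transpose]
          rw [Matrix.neg_mulVec, dotProduct_neg, h1, Matrix.dotProduct_mulVec,
            Matrix.vecMul_transpose, dotProduct_comm]
        have hBL : u ⬝ᵥ (-(Matrix.diagonal d1 * A12)) *ᵥ v = -(u ⬝ᵥ B *ᵥ v) := by
          rw [Matrix.neg_mulVec, dotProduct_neg, hB]
        have hM2q : v ⬝ᵥ (ε • (-(A22ᵀ * Matrix.diagonal d2 + Matrix.diagonal d2 * A22))) *ᵥ v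
            = ε * (v ⬝ᵥ (-(A22ᵀ * Matrix.diagonal d2 + Matrix.diagonal d2 * A22)) *ᵥ v) := by
          rw [Matrix.smul_mulVec, dotProduct_smul, smul_eq_mul]
        rw [hBT, hBL, hM2q]
        set M1 := -(A11ᵀ * Matrix.diagonal d1 + Matrix.diagonal d1 * A11)
        set M2 := -(A22ᵀ * Matrix.diagonal d2 + Matrix.diagonal d2 * A22)
        by_cases hv0 : v = 0
        · have hu0 : u ≠ 0 := by
            intro h
            apply hx
            rw [← hxe, h, hv0]
            ext (i | j) <;> rfl
          rw [hv0]
          simp only [Matrix.mulVec_zero, dotProduct_zero, zero_dotProduct, neg_zero, add_zero,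
            mul_zero]
          have h1 := hαq u
          have h2 : 0 < u ⬝ᵥ u := by
            rcases (dotProduct_self_eq_zero (v := u)).ne.mpr hu0 |>.lt_or_gt with h | h
            · exact absurd h (not_lt.mpr (Finset.sum_nonneg fun i _ => mul_self_nonneg _))
            · exact h
          nlinarith
        · set w : Fin p → ℝ := B *ᵥ v with hw
          have hVpos : 0 < v ⬝ᵥ v := by
            rcases (dotProduct_self_eq_zero (v := v)).ne.mpr hv0 |>.lt_or_gt with h | h
            · exact absurd h (not_lt.mpr (Finset.sum_nonneg fun i _ => mul_self_nonneg _))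
            · exact h
          have hzz : 0 ≤ α^2 * (u ⬝ᵥ u) - 2 * α * (u ⬝ᵥ w) + w ⬝ᵥ w := by
            have h0 : 0 ≤ (α • u - w) ⬝ᵥ (α • u - w) :=
              Finset.sum_nonneg fun i _ => mul_self_nonneg _
            have hexp : (α • u - w) ⬝ᵥ (α • u - w)
                = α^2 * (u ⬝ᵥ u) - 2 * α * (u ⬝ᵥ w) + w ⬝ᵥ w := by
              simp only [sub_dotProduct, dotProduct_sub, smul_dotProduct, dotProduct_smul,
                smul_eq_mul, dotProduct_comm w u]
              ring
            rwa [hexp] at h0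
          have hWτ : w ⬝ᵥ w ≤ τ * (v ⬝ᵥ v) := cauchy_bound' B v
          have h1 := hαq u
          have h2 := hβq v
          have hUnn : 0 ≤ u ⬝ᵥ u := Finset.sum_nonneg fun i _ => mul_self_nonneg _
          have hεM2 : (τ + α * β) * (v ⬝ᵥ v) ≤ α * (ε * (v ⬝ᵥ M2 *ᵥ v)) := by
            calc (τ + α * β) * (v ⬝ᵥ v) = (α * ε) * (β * (v ⬝ᵥ v)) := by
                  rw [← mul_assoc, hαεβ]
              _ ≤ (α * ε) * (v ⬝ᵥ M2 *ᵥ v) := by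
                  apply mul_le_mul_of_nonneg_left h2 (by positivity)
              _ = α * (ε * (v ⬝ᵥ M2 *ᵥ v)) := by ring
          have hform : α * β * (v ⬝ᵥ v) ≤ α * (u ⬝ᵥ M1 *ᵥ u + -(u ⬝ᵥ w) + (-(u ⬝ᵥ w) + ε * (v ⬝ᵥ M2 *ᵥ v))) := by
            nlinarith [mul_le_mul_of_nonneg_left h1 hα.le]
          have hpos : 0 < α * β * (v ⬝ᵥ v) := by positivity
          nlinarith
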